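/- For every integer n ≥ 2, the (n+1)-dimensional n-ary Filippov algebra C₁ degenerates to B; that is, the structure of B lies in the closure of the GL(V)-orbit of the structure of C₁. -/

import Mathlib

open Function Submodule

/-! Common framework: `V = ℂ^{n+1}`, `n`-ary multiplications as functions
`(Fin n → V) → V`, the action of `GL(V)` on them, orbits, and the
(n+1)-dimensional n-ary Filippov algebras of Kaygorodov–Volkov, each described
as an alternating `n`-linear map by its values on the increasing tuples of
distinct standard basis vectors (0-indexed: `bt n j` is the tuple omitting `e j`). -/

/-- The underlying space `V = ℂ^{n+1}`. -/
abbrev nV (n : ℕ) : Type := Fin (n + 1) → ℂ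

/-- The `j`-th standard basis vector of `V` (0-indexed). -/
def sb (n : ℕ) (j : Fin (n + 1)) : nV n := Pi.single j 1

/-- The increasing `n`-tuple of standard basis vectors omitting `e j`. -/
def bt (n : ℕ) (j : Fin (n + 1)) : Fin n → nV n := fun k => sb n (j.succAbove k)

/-- The action of `GL(V)` (invertible linear maps) on `n`-ary multiplications:
`(g • μ)(x₁, …, xₙ) = g (μ (g⁻¹ x₁, …, g⁻¹ xₙ))`. -/
noncomputable def glAct (n : ℕ) (g : nV n ≃ₗ[ℂ] nV n) (μ : (Fin n → nV n) → nV n) :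
    (Fin n → nV n) → nV n :=
  fun x => g (μ fun i => g.symm (x i))

/-- The `GL(V)`-orbit of an `n`-ary multiplication. -/
def glOrbit (n : ℕ) (μ : (Fin n → nV n) → nV n) : Set ((Fin n → nV n) → nV n) :=
  {ν | ∃ g : nV n ≃ₗ[ℂ] nV n, ν = glAct n g μ}

/-- The algebra `B`: `[e₂, …, e_{n+1}] = e₁` (0-indexed: the tuple omitting `e 0`
maps to `e 0`), all other increasing basis products zero. -/
def IsB (n : ℕ) (μ : AlternatingMap ℂ (nV n) (nV n) (Fin n)) : Prop :=
  μ (bt n 0) = sb n 0 ∧ ∀ j : Fin (n + 1), j ≠ 0 → μ (bt n j) = 0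

/-- The algebra `C₁`: `[e₂, …, e_{n+1}] = e₁`, `[e₁, e₃, …, e_{n+1}] = e₂`. -/
def IsC1 (n : ℕ) (μ : AlternatingMap ℂ (nV n) (nV n) (Fin n)) : Prop :=
  μ (bt n 0) = sb n 0 ∧ μ (bt n 1) = sb n 1 ∧
    ∀ j : Fin (n + 1), j ≠ 0 → j ≠ 1 → μ (bt n j) = 0

/-- The algebra `C₂(α)`: `[e₂, …, e_{n+1}] = α e₁ + e₂`, `[e₁, e₃, …, e_{n+1}] = e₂`. -/
def IsC2 (n : ℕ) (α : ℂ) (μ : AlternatingMap ℂ (nV n) (nV n) (Fin n)) : Prop :=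
  μ (bt n 0) = α • sb n 0 + sb n 1 ∧ μ (bt n 1) = sb n 1 ∧
    ∀ j : Fin (n + 1), j ≠ 0 → j ≠ 1 → μ (bt n j) = 0

/-- The algebra `C₃`: `[e₁, e₃, …, e_{n+1}] = e₁`, `[e₂, e₃, …, e_{n+1}] = e₂`. -/
def IsC3 (n : ℕ) (μ : AlternatingMap ℂ (nV n) (nV n) (Fin n)) : Prop :=
  μ (bt n 1) = sb n 0 ∧ μ (bt n 0) = sb n 1 ∧
    ∀ j : Fin (n + 1), j ≠ 0 → j ≠ 1 → μ (bt n j) = 0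

/-- The algebra `D_r`: `[e₁, …, e_{i-1}, e_{i+1}, …, e_{n+1}] = e_i` for `1 ≤ i ≤ r`
(0-indexed: the tuple omitting `e j` maps to `e j` for `j < r` and to `0` otherwise). -/
def IsD (n r : ℕ) (μ : AlternatingMap ℂ (nV n) (nV n) (Fin n)) : Prop :=
  ∀ j : Fin (n + 1), ((j : ℕ) < r → μ (bt n j) = sb n j) ∧ (r ≤ (j : ℕ) → μ (bt n j) = 0)

/-- Two alternating maps agreeing on all increasing basis tuples `bt n j` are equal. -/
lemma alt_ext {n : ℕ} (f g : AlternatingMap ℂ (nV n) (nV n) (Fin n))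
    (h : ∀ j, f (bt n j) = g (bt n j)) : f = g := by
  apply AlternatingMap.coe_multilinearMap_injective
  show f.toMultilinearMap = g.toMultilinearMap
  apply Module.Basis.ext_multilinear (fun _ => Pi.basisFun ℂ (Fin (n+1)))
  intro v
  have hb : (fun i => (Pi.basisFun ℂ (Fin (n+1))) (v i)) = fun i => sb n (v i) := by
    funext i; simp [sb, Pi.basisFun_apply]
  rw [show (f.toMultilinearMap : MultilinearMap ℂ _ _) (fun i => (Pi.basisFun ℂ (Fin (n+1))) (v i)) = f (fun i => sb n (v i)) by rw [hb]; rfl,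
      show (g.toMultilinearMap : MultilinearMap ℂ _ _) (fun i => (Pi.basisFun ℂ (Fin (n+1))) (v i)) = g (fun i => sb n (v i)) by rw [hb]; rfl]
  by_cases hv : Function.Injective v
  · obtain ⟨j, hj⟩ : ∃ j, ∀ i, v i ≠ j := by
      have hns : ¬ Function.Surjective v := fun hs => by
        have := Fintype.card_le_of_surjective v hs
        simp at this
      simp only [Function.Surjective, not_forall] at hns
      obtain ⟨j, hj⟩ := hns
      exact ⟨j, fun i hi => hj ⟨i, hi⟩⟩
    set σ0 : Fin n → Fin n := fun i => (finSuccAboveEquiv j).symm ⟨v i, hj i⟩ with hσ0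
    have hσinj : Function.Injective σ0 := by
      intro a b hab
      apply hv
      have h2 := congrArg (finSuccAboveEquiv j) hab
      simp only [hσ0, Equiv.apply_symm_apply] at h2
      exact congrArg Subtype.val h2
    obtain ⟨σ, hσ⟩ : ∃ σ : Equiv.Perm (Fin n), ∀ i, σ i = σ0 i :=
      ⟨Equiv.ofBijective σ0 (Finite.injective_iff_bijective.mp hσinj), fun i => rfl⟩
    have hvs : ∀ i, v i = j.succAbove (σ i) := by
      intro i
      rw [hσ i, hσ0]
      have := (finSuccAboveEquiv j).apply_symm_apply ⟨v i, hj i⟩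
      rw [finSuccAboveEquiv_apply] at this
      exact (congrArg Subtype.val this).symm
    have hcomp : (fun i => sb n (v i)) = (bt n j) ∘ σ := by
      funext i; simp [bt, hvs i]
    rw [hcomp, f.map_perm, g.map_perm, h j]
  · rw [Function.not_injective_iff] at hv
    obtain ⟨a, b, hab, hne⟩ := hv
    rw [f.map_eq_zero_of_eq _ (by rw [hab]) hne, g.map_eq_zero_of_eq _ (by rw [hab]) hne]

/-- STATEMENT 0 helper: the diagonal linear automorphism with nonzero diagonal `d`. -/
noncomputable def diagEquiv {n : ℕ} (d : Fin (n+1) → ℂ) (hd : ∀ j, d j ≠ 0) : nV n ≃ₗ[ℂ] nV n where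
  toFun x := fun j => d j * x j
  invFun x := fun j => (d j)⁻¹ * x j
  map_add' x y := by funext j; simp [mul_add]
  map_smul' c x := by funext j; simp [Pi.smul_apply, smul_eq_mul]; ring
  left_inv x := by funext j; exact inv_mul_cancel_left₀ (hd j) (x j)
  right_inv x := by funext j; exact mul_inv_cancel_left₀ (hd j) (x j)

theorem C1_degenerates_to_B (n : ℕ) (hn : 2 ≤ n)
    (μ ν : AlternatingMap ℂ (nV n) (nV n) (Fin n)) (hμ : IsC1 n μ) (hν : IsB n ν) :
    ⇑ν ∈ closure (glOrbit n ⇑μ) := by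
  classical
  -- the two distinguished indices 0 and 2
  set j2 : Fin (n+1) := ⟨2, by omega⟩ with hj2
  have h20 : j2 ≠ 0 := by simp [hj2, Fin.ext_iff]
  have hv1 : ((1 : Fin (n+1)) : ℕ) = 1 := by
    rw [Fin.val_one']
    exact Nat.mod_eq_of_lt (by omega)
  have h21 : j2 ≠ 1 := by
    intro h
    rw [Fin.ext_iff, hv1, hj2] at h
    simp at h
  have h10 : (1 : Fin (n+1)) ≠ 0 := by
    intro h
    rw [Fin.ext_iff, hv1, Fin.val_zero] at h
    exact one_ne_zero h
  -- diagonal matrices depending on a nonzero scalar s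
  set d : ℂ → Fin (n+1) → ℂ := fun s k => if k = 0 ∨ k = j2 then s else 1 with hd
  have hdnz : ∀ s : ℂ, s ≠ 0 → ∀ k, d s k ≠ 0 := by
    intro s hs k
    simp only [hd]
    split <;> simp [hs]
  have hd0 : ∀ s, d s 0 = s := by intro s; simp [hd]
  have hd1 : ∀ s, d s 1 = 1 := by intro s; simp [hd, h10, (Ne.symm h21)]
  -- total product of the diagonal
  have hP : ∀ s : ℂ, ∏ k, d s k = s ^ 2 := by
    intro s
    have : ∀ k, d s k = if k ∈ ({0, j2} : Finset (Fin (n+1))) then s else 1 := by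
      intro k; simp [hd, Finset.mem_insert, Finset.mem_singleton]
    rw [Finset.prod_congr rfl (fun k _ => this k), Finset.prod_ite_mem,
      Finset.univ_inter, Finset.prod_pair (Ne.symm h20)]
    ring
  -- partial products
  have hQ : ∀ s : ℂ, s ≠ 0 → ∀ j : Fin (n+1),
      ∏ i, d s (j.succAbove i) = s ^ 2 / d s j := by
    intro s hs j
    have h := Fin.prod_univ_succAbove (d s) j
    rw [hP s] at h
    rw [eq_div_iff (hdnz s hs j)]
    linear_combination -h
  -- the transported structure
  set τ : (nV n ≃ₗ[ℂ] nV n) → AlternatingMap ℂ (nV n) (nV n) (Fin n) :=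
    fun g => (g : nV n →ₗ[ℂ] nV n).compAlternatingMap
      (μ.compLinearMap (g.symm : nV n →ₗ[ℂ] nV n)) with hτ
  have hτorbit : ∀ g, ⇑(τ g) ∈ glOrbit n ⇑μ := by
    intro g
    exact ⟨g, by funext x; simp [hτ, glAct]⟩
  -- key computation of τ on basis tuples
  have hgsymm : ∀ (s : ℂ) (hs : s ≠ 0) (j : Fin (n+1)) (i : Fin n),
      (diagEquiv (d s) (hdnz s hs)).symm (bt n j i) = (d s (j.succAbove i))⁻¹ • bt n j i := by
    intro s hs j i
    apply (diagEquiv (d s) (hdnz s hs)).injective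
    simp only [LinearEquiv.apply_symm_apply, map_smul]
    funext k
    simp only [diagEquiv, LinearEquiv.coe_mk, LinearMap.coe_mk, AddHom.coe_mk, Pi.smul_apply, smul_eq_mul, bt, sb,
      Pi.single_apply]
    rcases eq_or_ne k (j.succAbove i) with h | h
    · subst h
      rw [if_pos rfl, mul_one]
      exact (inv_mul_cancel₀ (hdnz s hs (j.succAbove i))).symm
    · simp [h]
  have hτval : ∀ (s : ℂ) (hs : s ≠ 0) (j : Fin (n+1)),
      (τ (diagEquiv (d s) (hdnz s hs))) (bt n j)
        = (s ^ 2 / d s j)⁻¹ • (fun k => d s k * (μ (bt n j)) k) := by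
    intro s hs j
    simp only [hτ, LinearMap.compAlternatingMap_apply, AlternatingMap.compLinearMap_apply,
      LinearEquiv.coe_coe]
    rw [show (fun i => (diagEquiv (d s) (hdnz s hs)).symm (bt n j i))
          = fun i => (d s (j.succAbove i))⁻¹ • bt n j i from funext (hgsymm s hs j)]
    have hms : μ (fun i => (d s (j.succAbove i))⁻¹ • bt n j i)
        = (∏ i, (d s (j.succAbove i))⁻¹) • μ (bt n j) :=
      μ.toMultilinearMap.map_smul_univ (fun i => (d s (j.succAbove i))⁻¹) (bt n j)
    rw [hms, map_smul, Finset.prod_inv_distrib, hQ s hs j]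
    rfl
  -- multiplication of a diagonal matrix against a basis vector
  have hdiag_single : ∀ (s : ℂ) (m : Fin (n+1)),
      (fun k => d s k * (sb n m) k) = d s m • sb n m := by
    intro s m
    funext k
    simp only [sb, Pi.smul_apply, smul_eq_mul, Pi.single_apply]
    rcases eq_or_ne k m with h | h
    · subst h; ring
    · simp [h]
  -- τ equals ν + (s²)⁻¹ • (μ - ν)
  have hkey : ∀ (s : ℂ) (hs : s ≠ 0),
      τ (diagEquiv (d s) (hdnz s hs)) = ν + (s ^ 2)⁻¹ • (μ - ν) := by
    intro s hs
    apply alt_ext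
    intro j
    have hrhs : (ν + (s ^ 2)⁻¹ • (μ - ν)) (bt n j)
        = ν (bt n j) + (s ^ 2)⁻¹ • (μ (bt n j) - ν (bt n j)) := by
      simp
    rcases eq_or_ne j 0 with rfl | hj0
    · rw [hτval s hs 0, hμ.1, hdiag_single, hd0, hrhs, hν.1, hμ.1]
      rw [sub_self, smul_zero, add_zero, smul_smul]
      rw [show (s^2/s : ℂ) = s from by rw [pow_two, mul_div_assoc, div_self hs, mul_one]]
      rw [inv_mul_cancel₀ hs, one_smul]
    rcases eq_or_ne j 1 with rfl | hj1
    · rw [hτval s hs 1, hμ.2.1, hdiag_single, hd1, hrhs, hν.2 1 h10, hμ.2.1]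
      rw [one_smul, zero_add, sub_zero]
      field_simp
    · rw [hτval s hs j, hμ.2.2 j hj0 hj1, hrhs, hν.2 j hj0, hμ.2.2 j hj0 hj1]
      simp only [sub_zero, smul_zero, add_zero]
      funext k
      simp
  -- the sequence of scalars
  set s : ℕ → ℂ := fun m => ((m + 1 : ℕ) : ℂ) with hsdef
  have hsnz : ∀ m, s m ≠ 0 := fun m => Nat.cast_ne_zero.mpr (Nat.succ_ne_zero m)
  have hc : Filter.Tendsto (fun m => ((s m) ^ 2)⁻¹) Filter.atTop (nhds 0) := by
    have h1 : Filter.Tendsto (fun m : ℕ => (s m)⁻¹) Filter.atTop (nhds 0) := by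
      rw [tendsto_zero_iff_norm_tendsto_zero]
      have : (fun m : ℕ => ‖(s m)⁻¹‖) = fun m : ℕ => 1 / ((m : ℝ) + 1) := by
        funext m
        rw [norm_inv, one_div, hsdef]
        rw [Complex.norm_natCast]
        push_cast
        ring
      rw [this]
      exact tendsto_one_div_add_atTop_nhds_zero_nat
    have h2 := h1.pow 2
    simp only [ne_eq, OfNat.ofNat_ne_zero, not_false_eq_true, zero_pow] at h2
    convert h2 using 2 with m
    rw [inv_pow]
  -- pointwise convergence of the transported structures to ν
  have htend : Filter.Tendsto (fun m => ⇑(τ (diagEquiv (d (s m)) (hdnz (s m) (hsnz m)))))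
      Filter.atTop (nhds ⇑ν) := by
    have heq : (fun m => ⇑(τ (diagEquiv (d (s m)) (hdnz (s m) (hsnz m)))))
        = fun m => ⇑ν + ((s m) ^ 2)⁻¹ • (⇑μ - ⇑ν) := by
      funext m
      rw [hkey (s m) (hsnz m)]
      rfl
    rw [heq]
    have := (tendsto_const_nhds (x := ⇑ν) (f := Filter.atTop (α := ℕ))).add
      (hc.smul_const (⇑μ - ⇑ν))
    simpa using this
  exact mem_closure_of_tendsto htend (Filter.Eventually.of_forall fun m =>
    hτorbit (diagEquiv (d (s m)) (hdnz (s m) (hsnz m))))
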